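/- Let G be a graph with feedback vertex set M, and let (X, {T₁,…,T_t}) be a family where X ⊆ M has size t ≥ 2 and T₁,…,T_t are pairwise disjoint, pairwise non-adjacent connected vertex subsets of G − M each satisfying X ⊆ N(T_i). Then every feedback vertex set S of G either contains at least t−1 vertices of X, or intersects all but at most one of the sets T₁,…,T_t. -/

import Mathlib

open SimpleGraph Finset

/-- `S` is a feedback vertex set of `G`: removing `S` leaves an acyclic graph. -/
def IsFVS {V : Type*} (G : SimpleGraph V) (S : Set V) : Prop :=
  (G.induce Sᶜ).IsAcyclic

private def auxHom {V : Type*} (G : SimpleGraph V) (Sc : Set V) (Tk : Finset V)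
    (hTS : (Tk : Set V) ⊆ Sc) : G.induce (Tk : Set V) →g G.induce Sc :=
  ⟨fun z => ⟨z.1, hTS z.2⟩, fun h => h⟩

lemma aux_walk {V : Type*} (G : SimpleGraph V) (Sc : Set V) {x y : V}
    (hx : x ∈ Sc) (hy : y ∈ Sc) (Tk : Finset V) (hTS : (Tk : Set V) ⊆ Sc)
    (hconn : (G.induce (Tk : Set V)).Connected)
    {u v : V} (hu : u ∈ Tk) (hv : v ∈ Tk) (hxu : G.Adj x u) (hyv : G.Adj y v)
    (hxT : x ∉ Tk) (hyT : y ∉ Tk) (hxy : x ≠ y) :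
    ∃ W : (G.induce Sc).Walk ⟨x, hx⟩ ⟨y, hy⟩,
      (∀ z ∈ W.support, (z : V) = x ∨ (z : V) = y ∨ (z : V) ∈ Tk) ∧
      s((⟨x, hx⟩ : Sc), (⟨y, hy⟩ : Sc)) ∉ W.edges := by
  classical
  set f := auxHom G Sc Tk hTS with hf
  obtain ⟨w⟩ := (hconn ⟨u, by simpa using hu⟩ ⟨v, by simpa using hv⟩ : _)
  have hax : (G.induce Sc).Adj ⟨x, hx⟩ (f ⟨u, by simpa using hu⟩) := hxu
  have hvb : (G.induce Sc).Adj (f ⟨v, by simpa using hv⟩) ⟨y, hy⟩ := hyv.symm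
  refine ⟨Walk.cons hax ((w.map f).concat hvb), ?_, ?_⟩
  · intro z hz
    simp only [Walk.support_cons, Walk.support_concat, Walk.support_map,
      List.concat_eq_append, List.mem_cons, List.mem_append, List.mem_map,
      List.mem_singleton] at hz
    rcases hz with rfl | ⟨⟨z', hz', rfl⟩ | rfl | h⟩
    · exact Or.inl rfl
    · exact Or.inr (Or.inr z'.2)
    · exact Or.inr (Or.inl rfl)
    · exact absurd h List.not_mem_nil
  · intro he
    simp only [Walk.edges_cons, Walk.edges_concat, Walk.edges_map,
      List.concat_eq_append, List.mem_cons, List.mem_append, List.mem_map,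
      List.mem_singleton] at he
    rcases he with he | ⟨⟨e', he', heq⟩ | he | h⟩
    · rw [Sym2.eq_iff] at he
      rcases he with ⟨-, hb⟩ | ⟨hb, -⟩
      · exact hyT (by rw [show y = u from congrArg Subtype.val hb]; exact hu)
      · exact hxT (by rw [show x = u from congrArg Subtype.val hb]; exact hu)
    · have : (⟨x, hx⟩ : Sc) ∈ (w.map f).support := by
        refine Walk.fst_mem_support_of_mem_edges (u := ⟨y, hy⟩) _ ?_
        rw [Walk.edges_map]
        exact List.mem_map.mpr ⟨e', he', heq⟩
      rw [Walk.support_map] at this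
      obtain ⟨z', hz', hzz⟩ := List.mem_map.mp this
      exact hxT (by rw [show x = (z' : V) from (congrArg Subtype.val hzz).symm]; exact z'.2)
    · rw [Sym2.eq_iff] at he
      rcases he with ⟨ha, -⟩ | ⟨-, ha⟩
      · exact hxT (by rw [show x = v from congrArg Subtype.val ha]; exact hv)
      · exact hyT (by rw [show y = v from congrArg Subtype.val ha]; exact hv)
    · exact absurd h List.not_mem_nil

/-- Given a `K̃_{t,t}` structure `(X, {T₁,…,T_t})` with `X ⊆ M` of size `t ≥ 2` and pairwise
disjoint, pairwise non-adjacent connected subsets `T_i` of `G - M` each satisfying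
`X ⊆ N(T_i)`, every feedback vertex set `S` of `G` either contains at least `t - 1` vertices
of `X`, or intersects all but at most one of the sets `T_i`. -/
theorem stmt5 {V : Type*} [DecidableEq V] (G : SimpleGraph V)
    (M : Finset V) (hM : IsFVS G ↑M)
    (t : ℕ) (ht : 2 ≤ t) (X : Finset V) (hX : X ⊆ M) (hXcard : X.card = t)
    (T : Fin t → Finset V)
    (hTM : ∀ i, Disjoint (T i) M)
    (hdisj : ∀ i j, i ≠ j → Disjoint (T i) (T j))
    (hnonadj : ∀ i j, i ≠ j → ∀ u ∈ T i, ∀ v ∈ T j, ¬ G.Adj u v)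
    (hconn : ∀ i, (G.induce (T i : Set V)).Connected)
    (hnb : ∀ i, ∀ x ∈ X, ∃ v ∈ T i, G.Adj x v)
    (S : Finset V) (hS : IsFVS G ↑S) :
    t - 1 ≤ (X ∩ S).card ∨ ∃ j, ∀ i, i ≠ j → (T i ∩ S).Nonempty := by
  classical
  by_contra hcon
  push_neg at hcon
  obtain ⟨h1, h2⟩ := hcon
  -- find two indices whose trees avoid S
  obtain ⟨i₁, -, hT1⟩ := h2 ⟨0, by omega⟩
  obtain ⟨i₂, hne, hT2⟩ := h2 i₁
  -- find x ≠ y in X \ S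
  have hcards : 2 ≤ (X \ S).card := by
    have := Finset.card_sdiff_add_card_inter X S
    omega
  obtain ⟨x, y, hxm, hym, hxy⟩ := Finset.one_lt_card_iff.mp (show 1 < (X \ S).card by omega)
  obtain ⟨hxX, hxS⟩ := Finset.mem_sdiff.mp hxm
  obtain ⟨hyX, hyS⟩ := Finset.mem_sdiff.mp hym
  have hxM : x ∈ M := hX hxX
  have hyM : y ∈ M := hX hyX
  have hx : x ∈ ((S : Set V))ᶜ := by simpa using hxS
  have hy : y ∈ ((S : Set V))ᶜ := by simpa using hyS
  have hTS : ∀ k : Fin t, T k ∩ S = ∅ → (T k : Set V) ⊆ ((S : Set V))ᶜ := by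
    intro k hk z hz hzS
    have : z ∈ T k ∩ S := Finset.mem_inter.mpr ⟨by exact_mod_cast hz, by exact_mod_cast hzS⟩
    simp [hk] at this
  have hnotT : ∀ k : Fin t, ∀ z ∈ M, z ∉ T k := fun k z hz hzT =>
    (Finset.disjoint_left.mp (hTM k) hzT) hz
  obtain ⟨u₁, hu₁, hxu₁⟩ := hnb i₁ x hxX
  obtain ⟨v₁, hv₁, hyv₁⟩ := hnb i₁ y hyX
  obtain ⟨u₂, hu₂, hxu₂⟩ := hnb i₂ x hxX
  obtain ⟨v₂, hv₂, hyv₂⟩ := hnb i₂ y hyX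
  obtain ⟨W₁, hW₁s, hW₁e⟩ := aux_walk G ((S : Set V))ᶜ hx hy (T i₁) (hTS i₁ hT1)
    (hconn i₁) hu₁ hv₁ hxu₁ hyv₁ (hnotT i₁ x hxM) (hnotT i₁ y hyM) hxy
  obtain ⟨W₂, hW₂s, hW₂e⟩ := aux_walk G ((S : Set V))ᶜ hx hy (T i₂) (hTS i₂ hT2)
    (hconn i₂) hu₂ hv₂ hxu₂ hyv₂ (hnotT i₂ x hxM) (hnotT i₂ y hyM) hxy
  have hp : W₁.toPath = W₂.toPath := hS.path_unique _ _
  -- analyze the path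
  set p := (W₁.toPath : (G.induce ((S : Set V))ᶜ).Walk ⟨x, hx⟩ ⟨y, hy⟩) with hpdef
  have hps : ∀ z ∈ p.support, (z : V) = x ∨ (z : V) = y ∨ (z : V) ∈ T i₁ := fun z hz =>
    hW₁s z (Walk.support_toPath_subset W₁ hz)
  have hsup : p.support
      = (W₂.toPath : (G.induce ((S : Set V))ᶜ).Walk ⟨x, hx⟩ ⟨y, hy⟩).support := by
    rw [hpdef, hp]
  have hps2 : ∀ z ∈ p.support, (z : V) = x ∨ (z : V) = y ∨ (z : V) ∈ T i₂ := by
    intro z hz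
    exact hW₂s z (Walk.support_toPath_subset W₂ (hsup ▸ hz))
  cases hq : p with
  | nil => exact hxy rfl
  | cons h q =>
    rename_i c
    have hcs : c ∈ p.support := by rw [hq]; simp [Walk.support_cons, q.start_mem_support]
    have hc1 := hps c hcs
    have hc2 := hps2 c hcs
    have hcxy : (c : V) = x ∨ (c : V) = y := by
      rcases hc1 with h' | h' | h' <;> rcases hc2 with h'' | h'' | h''
      all_goals first
        | exact Or.inl ‹(c : V) = x›
        | exact Or.inr ‹(c : V) = y›
        | exact absurd ‹(c : V) ∈ T i₂› (Finset.disjoint_left.mp (hdisj i₁ i₂ hne.symm) h')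
    have hcx : (c : V) ≠ x := fun hcx => h.ne' (Subtype.ext hcx)
    have hcy : c = ⟨y, hy⟩ := Subtype.ext (hcxy.resolve_left hcx)
    have hedge : s((⟨x, hx⟩ : ↥((S : Set V)ᶜ)), c) ∈ p.edges := by rw [hq]; simp
    rw [hcy] at hedge
    exact hW₁e (Walk.edges_toPath_subset W₁ hedge)
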